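/- Let d ≥ 3 and K = (k_1,...,k_d) with each k_i in ℕ≥2 ∪ {∞}. The alternating subgroup W_K^+ of the polygonal Coxeter group W_K admits the presentation ⟨a_1,...,a_d | a_i^{k_i} = 1 for each i with k_i < ∞, and a_1 a_2 ⋯ a_d = 1⟩. -/

import Mathlib

/-- Relators for the presentation `⟨a_1,…,a_d ∣ a_i^{k_i} = 1 (k_i < ∞), a_1 a_2 ⋯ a_d = 1⟩`
of the alternating subgroup of the polygonal Coxeter group.  Here `k i = 0` encodes `k_i = ∞`
(the relator `a_i ^ 0 = 1` is vacuous). -/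
def altRels (d : ℕ) (k : Fin d → ℕ) : Set (FreeGroup (Fin d)) :=
  {r | (∃ i, r = FreeGroup.of i ^ k i) ∨
    r = (List.ofFn (fun i : Fin d => FreeGroup.of i)).prod}

namespace Stmt0Aux

variable {d : ℕ} (k : Fin d → ℕ)

/-- The presented group. -/
abbrev GG (k : Fin d → ℕ) := PresentedGroup (altRels d k)

/-- Its generators. -/
def aa (i : Fin d) : GG k := PresentedGroup.of i

lemma mk_rel {r : FreeGroup (Fin d)} (hr : r ∈ altRels d k) :
    PresentedGroup.mk (altRels d k) r = 1 :=
  (QuotientGroup.eq_one_iff r).mpr (Subgroup.subset_normalClosure hr)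

lemma aa_pow (i : Fin d) : aa k i ^ k i = 1 := by
  have h : aa k i ^ k i = PresentedGroup.mk (altRels d k) (FreeGroup.of i ^ k i) := by
    rw [map_pow]; rfl
  rw [h]; exact mk_rel k (Or.inl ⟨i, rfl⟩)

lemma aa_prod : (List.ofFn (aa k)).prod = 1 := by
  have h : (List.ofFn (aa k)).prod
      = PresentedGroup.mk (altRels d k) ((List.ofFn fun i : Fin d => FreeGroup.of i)).prod := by
    rw [map_list_prod, List.map_ofFn]; rfl
  rw [h]; exact mk_rel k (Or.inr rfl)

/-- Partial products `p j = a 0 * ⋯ * a (j-1)`. -/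
def pp (j : ℕ) : GG k := ((List.ofFn (aa k)).take j).prod

lemma pp_zero : pp k 0 = 1 := rfl

lemma pp_succ (j : ℕ) (h : j < d) : pp k (j + 1) = pp k j * aa k ⟨j, h⟩ := by
  unfold pp
  rw [List.prod_take_succ _ _ (by simpa using h)]
  congr 1
  simp

lemma pp_d : pp k d = 1 := by
  unfold pp
  rw [List.take_of_length_le (by simp)]
  exact aa_prod k

lemma telescope {H : Type*} [Group H] :
    ∀ (n : ℕ) (g : ℕ → H),
      (List.ofFn fun i : Fin n => g i.val * (g (i.val + 1))⁻¹).prod = g 0 * (g n)⁻¹ := by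
  intro n
  induction n with
  | zero => intro g; simp
  | succ m ih =>
      intro g
      rw [List.ofFn_succ, List.prod_cons]
      have h := ih (fun j => g (j + 1))
      have he : (List.ofFn fun i : Fin m =>
          g (i.succ.val) * (g (i.succ.val + 1))⁻¹).prod = g 1 * (g (m + 1))⁻¹ := by
        simpa using h
      rw [he]
      simp only [Fin.val_zero, Nat.zero_add, zero_add]
      group

lemma sigmaF_eq (i : Fin d) :
    pp k i.val * (aa k i)⁻¹ * (pp k i.val)⁻¹ = pp k i.val * (pp k (i.val + 1))⁻¹ := by
  rw [pp_succ k i.val i.isLt]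
  simp [Fin.eta, mul_assoc]

lemma sigma_rels :
    ∀ r ∈ altRels d k,
      (FreeGroup.lift fun i : Fin d => pp k i.val * (aa k i)⁻¹ * (pp k i.val)⁻¹) r = 1 := by
  rintro r (⟨i, rfl⟩ | rfl)
  · rw [map_pow, FreeGroup.lift_apply_of]
    have h : pp k i.val * (aa k i)⁻¹ * (pp k i.val)⁻¹
        = (MulAut.conj (pp k i.val)) (aa k i)⁻¹ := by
      simp [MulAut.conj_apply, mul_assoc]
    rw [h, ← map_pow, inv_pow, aa_pow]
    simp
  · rw [map_list_prod, List.map_ofFn]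
    have h3 : (⇑(FreeGroup.lift fun i : Fin d =>
          pp k i.val * (aa k i)⁻¹ * (pp k i.val)⁻¹) ∘ FreeGroup.of)
        = fun i : Fin d => pp k i.val * (pp k (i.val + 1))⁻¹ := by
      funext i
      rw [Function.comp_apply, FreeGroup.lift_apply_of, sigmaF_eq]
    have h2 : ((List.ofFn fun i : Fin d => pp k i.val * (pp k (i.val + 1))⁻¹)).prod
        = pp k 0 * (pp k d)⁻¹ := telescope d (pp k)
    rw [h3, h2, pp_zero, pp_d]
    simp

/-- The involution σ. -/
def sigma : GG k →* GG k := PresentedGroup.toGroup (sigma_rels k)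

lemma sigma_aa (i : Fin d) : sigma k (aa k i) = pp k i.val * (pp k (i.val + 1))⁻¹ := by
  rw [← sigmaF_eq]
  exact PresentedGroup.toGroup.of (sigma_rels k)

lemma sigma_pp : ∀ j : ℕ, j ≤ d → sigma k (pp k j) = (pp k j)⁻¹ := by
  intro j
  induction j with
  | zero => intro _; simp [pp_zero]
  | succ m ih =>
      intro hm
      have hmd : m < d := hm
      rw [pp_succ k m hmd, map_mul, ih (le_of_lt hmd), sigma_aa]
      simp only [Fin.val_mk]
      rw [← pp_succ k m hmd]
      group

lemma sigma_sigma (g : GG k) : sigma k (sigma k g) = g := by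
  have h : (sigma k).comp (sigma k) = MonoidHom.id (GG k) := by
    apply PresentedGroup.ext
    intro i
    have hof : (PresentedGroup.of i : GG k) = aa k i := rfl
    rw [MonoidHom.comp_apply, MonoidHom.id_apply, hof, sigma_aa, map_mul, map_inv,
      sigma_pp k i.val (le_of_lt i.isLt), sigma_pp k (i.val + 1) i.isLt, inv_inv,
      pp_succ k i.val i.isLt]
    group
  calc sigma k (sigma k g) = ((sigma k).comp (sigma k)) g := rfl
    _ = g := by rw [h]; rfl

/-- σ as an automorphism. -/
def SS : MulAut (GG k) :=
  { toFun := sigma k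
    invFun := sigma k
    left_inv := sigma_sigma k
    right_inv := sigma_sigma k
    map_mul' := map_mul (sigma k) }

lemma SS_sq : SS k ^ 2 = 1 := by
  ext g
  show sigma k (sigma k g) = g
  exact sigma_sigma k g

/-- Homomorphism from `Multiplicative (ZMod 2)` determined by an involution. -/
def homC2 {H : Type*} [Group H] (x : H) (hx : x ^ 2 = 1) : Multiplicative (ZMod 2) →* H where
  toFun t := x ^ (Multiplicative.toAdd t).val
  map_one' := by
    show x ^ (0 : ZMod 2).val = 1
    simp [ZMod.val_zero]
  map_mul' s t := by
    show x ^ (Multiplicative.toAdd s + Multiplicative.toAdd t).val = _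
    rw [ZMod.val_add, ← pow_eq_pow_mod _ hx, pow_add]

lemma homC2_ofAdd_one {H : Type*} [Group H] (x : H) (hx : x ^ 2 = 1) :
    homC2 x hx (Multiplicative.ofAdd 1) = x := by
  show x ^ (1 : ZMod 2).val = x
  rw [ZMod.val_one]
  exact pow_one x

/-- The action of `ZMod 2` on the presented group. -/
def theta : Multiplicative (ZMod 2) →* MulAut (GG k) := homC2 (SS k) (SS_sq k)

/-- The semidirect product. -/
abbrev EE (k : Fin d → ℕ) := SemidirectProduct (GG k) (Multiplicative (ZMod 2)) (theta k)

/-- The images of the Coxeter generators in the semidirect product. -/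
def ff (i : Fin d) : EE k := ⟨(pp k i.val)⁻¹, Multiplicative.ofAdd 1⟩

lemma C2_sq : (Multiplicative.ofAdd (1 : ZMod 2)) * (Multiplicative.ofAdd 1) = 1 := by decide

lemma ff_mul (i j : Fin d) (hj : j.val ≤ d) :
    ff k i * ff k j = SemidirectProduct.inl ((pp k i.val)⁻¹ * pp k j.val) := by
  have hth : theta k (Multiplicative.ofAdd 1) = SS k := homC2_ofAdd_one _ _
  ext
  · show (pp k i.val)⁻¹ * (theta k (Multiplicative.ofAdd 1)) ((pp k j.val)⁻¹) = _
    rw [hth]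
    show (pp k i.val)⁻¹ * sigma k ((pp k j.val)⁻¹) = _
    rw [map_inv, sigma_pp k j.val hj, inv_inv]
    rfl
  · show Multiplicative.ofAdd (1 : ZMod 2) * Multiplicative.ofAdd 1 = 1
    exact C2_sq

lemma key (i : Fin d) : (pp k i.val)⁻¹ * pp k ((i.val + 1) % d) = aa k i := by
  by_cases h : i.val + 1 < d
  · rw [Nat.mod_eq_of_lt h, pp_succ k i.val i.isLt]
    simp
  · have h' : i.val + 1 = d := by have := i.isLt; omega
    rw [h', Nat.mod_self, pp_zero, mul_one]
    have hd1 : pp k i.val * aa k i = 1 := by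
      have h2 := pp_succ k i.val i.isLt
      simp only [Fin.eta] at h2
      rw [← h2, h', pp_d]
    exact inv_eq_of_mul_eq_one_right hd1


section CoxeterSide

variable {d : ℕ} (k : Fin d → ℕ) (M : CoxeterMatrix (Fin d))

lemma ff_sq (i : Fin d) : ff k i * ff k i = 1 := by
  rw [ff_mul k i i (le_of_lt i.isLt), inv_mul_cancel, map_one]

lemma conj_pow' {H : Type*} [Group H] (g h : H) (n : ℕ) :
    (g * h * g⁻¹) ^ n = g * h ^ n * g⁻¹ := by
  rw [← MulAut.conj_apply, ← map_pow, MulAut.conj_apply]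

lemma lift_pow (h1 : 1 < d) (i : Fin d) :
    (ff k i * ff k (i + ⟨1, h1⟩)) ^ k i = 1 := by
  rw [ff_mul k i _ (le_of_lt (i + ⟨1, h1⟩).isLt)]
  have hv : ((i + ⟨1, h1⟩ : Fin d)).val = (i.val + 1) % d := by
    simp [Fin.add_def]
  rw [hv, key, ← map_pow, aa_pow, map_one]

lemma liftable (hd : 3 ≤ d)
    (hM : ∀ i j : Fin d, M.M i j =
      if i = j then 1 else if j = i + ⟨1, Nat.lt_of_lt_of_le (by norm_num) hd⟩ then k i
      else if i = j + ⟨1, Nat.lt_of_lt_of_le (by norm_num) hd⟩ then k j else 0) :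
    CoxeterMatrix.IsLiftable M (ff k) := by
  have h1 : 1 < d := by omega
  intro i j
  show (ff k i * ff k j) ^ M.M i j = 1
  rw [hM i j]
  split_ifs with hij hj hi
  · subst hij; rw [pow_one]; exact ff_sq k i
  · subst hj; exact lift_pow k h1 i
  · subst hi
    have h2 : ff k (j + ⟨1, h1⟩) * ff k j
        = (ff k j)⁻¹ * (ff k j * ff k (j + ⟨1, h1⟩)) * ((ff k j)⁻¹)⁻¹ := by
      group
    rw [h2, conj_pow', lift_pow k h1 j]
    group
  · rw [pow_zero]

/-- The homomorphism `W_K →* G ⋊ C2`. -/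
def Theta (hd : 3 ≤ d)
    (hM : ∀ i j : Fin d, M.M i j =
      if i = j then 1 else if j = i + ⟨1, Nat.lt_of_lt_of_le (by norm_num) hd⟩ then k i
      else if i = j + ⟨1, Nat.lt_of_lt_of_le (by norm_num) hd⟩ then k j else 0) :
    M.Group →* EE k :=
  (M.toCoxeterSystem).lift ⟨ff k, liftable k M hd hM⟩

lemma Theta_of (hd : 3 ≤ d)
    (hM : ∀ i j : Fin d, M.M i j =
      if i = j then 1 else if j = i + ⟨1, Nat.lt_of_lt_of_le (by norm_num) hd⟩ then k i
      else if i = j + ⟨1, Nat.lt_of_lt_of_le (by norm_num) hd⟩ then k j else 0) (i : Fin d) :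
    Theta k M hd hM (PresentedGroup.of i) = ff k i :=
  (M.toCoxeterSystem).lift_apply_simple (liftable k M hd hM) i

/-- The simple reflections, as a function of a natural number index mod `d`. -/
def sfun (hd0 : 0 < d) (j : ℕ) : M.Group := M.simple ⟨j % d, Nat.mod_lt j hd0⟩

lemma sfun_sq (hd0 : 0 < d) (j : ℕ) : sfun M hd0 j * sfun M hd0 j = 1 :=
  M.toCoxeterSystem.simple_mul_simple_self _

lemma sfun_inv (hd0 : 0 < d) (j : ℕ) : (sfun M hd0 j)⁻¹ = sfun M hd0 j :=
  inv_eq_of_mul_eq_one_right (sfun_sq M hd0 j)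

lemma simple_eq_sfun (hd0 : 0 < d) (i : Fin d) : M.simple i = sfun M hd0 i.val := by
  unfold sfun
  congr 1
  exact Fin.ext (Nat.mod_eq_of_lt i.isLt).symm

lemma sfun_d (hd0 : 0 < d) : sfun M hd0 d = sfun M hd0 0 := by
  unfold sfun
  congr 1
  exact Fin.ext (by simp)

/-- Images of the generators of the presented group in the Coxeter group. -/
def phiF (h1 : 1 < d) (i : Fin d) : M.Group := M.simple i * M.simple (i + ⟨1, h1⟩)

lemma phiF_eq (h1 : 1 < d) (i : Fin d) :
    phiF M h1 i = sfun M (by omega) i.val * sfun M (by omega) (i.val + 1) := by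
  unfold phiF
  rw [simple_eq_sfun M (by omega) i, simple_eq_sfun M (by omega) (i + ⟨1, h1⟩)]
  congr 1
  unfold sfun
  congr 1
  apply Fin.ext
  show ((i + ⟨1, h1⟩ : Fin d)).val % d = (i.val + 1) % d
  have hv : ((i + ⟨1, h1⟩ : Fin d)).val = (i.val + 1) % d := by
    simp [Fin.add_def]
  rw [hv, Nat.mod_mod_of_dvd _ dvd_rfl]

lemma tele2 (h1 : 1 < d) :
    ∀ j : ℕ, j ≤ d → ((List.ofFn (phiF M h1)).take j).prod
      = sfun M (by omega) 0 * sfun M (by omega) j := by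
  intro j
  induction j with
  | zero =>
      intro _
      simp only [List.take_zero, List.prod_nil]
      exact (sfun_sq M (by omega) 0).symm
  | succ m ih =>
      intro hm
      have hmd : m < d := hm
      rw [List.prod_take_succ _ m (by simpa using hmd), ih (le_of_lt hmd)]
      have hget : (List.ofFn (phiF M h1))[m]'(by simpa using hmd) = phiF M h1 ⟨m, hmd⟩ := by
        simp
      rw [hget, phiF_eq]
      have hv : (⟨m, hmd⟩ : Fin d).val = m := rfl
      rw [hv, mul_assoc, ← mul_assoc (sfun M (by omega : (0:ℕ) < d) m), sfun_sq, one_mul]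

lemma phi_rels (hd : 3 ≤ d)
    (hM : ∀ i j : Fin d, M.M i j =
      if i = j then 1 else if j = i + ⟨1, Nat.lt_of_lt_of_le (by norm_num) hd⟩ then k i
      else if i = j + ⟨1, Nat.lt_of_lt_of_le (by norm_num) hd⟩ then k j else 0) :
    ∀ r ∈ altRels d k, (FreeGroup.lift (phiF M (Nat.lt_of_lt_of_le (by norm_num) hd))) r = 1 := by
  have h1 : 1 < d := by omega
  rintro r (⟨i, rfl⟩ | rfl)
  · rw [map_pow, FreeGroup.lift_apply_of]
    have hne : i ≠ i + ⟨1, h1⟩ := by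
      intro hc
      have := congrArg Fin.val hc
      rw [Fin.val_add] at this
      simp only [Fin.val_mk] at this
      rcases Nat.lt_or_ge (i.val + 1) d with h | h
      · rw [Nat.mod_eq_of_lt h] at this; omega
      · have : (i.val + 1) % d = 0 := by
          have : i.val + 1 = d := by have := i.isLt; omega
          rw [this, Nat.mod_self]
        omega
    have hrel := M.toCoxeterSystem.simple_mul_simple_pow i (i + ⟨1, h1⟩)
    have hMk : M.M i (i + ⟨1, h1⟩) = k i := by
      rw [hM i (i + ⟨1, h1⟩), if_neg hne, if_pos rfl]
    rw [show (M.toCoxeterSystem.simple = M.simple) from rfl] at hrel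
    rw [show ((M.M i (i + ⟨1, h1⟩) : ℕ)) = k i from hMk] at hrel
    exact hrel
  · rw [map_list_prod, List.map_ofFn]
    have h3 : (⇑(FreeGroup.lift (phiF M (by omega : 1 < d))) ∘ FreeGroup.of)
        = phiF M (by omega) := by
      funext i
      rw [Function.comp_apply, FreeGroup.lift_apply_of]
    rw [h3]
    have h4 := tele2 M h1 d le_rfl
    rw [List.take_of_length_le (by simp)] at h4
    rw [h4, sfun_d, sfun_sq]

/-- The homomorphism `G →* W_K`. -/
def phi (hd : 3 ≤ d)
    (hM : ∀ i j : Fin d, M.M i j =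
      if i = j then 1 else if j = i + ⟨1, Nat.lt_of_lt_of_le (by norm_num) hd⟩ then k i
      else if i = j + ⟨1, Nat.lt_of_lt_of_le (by norm_num) hd⟩ then k j else 0) :
    GG k →* M.Group :=
  PresentedGroup.toGroup (phi_rels k M hd hM)

lemma phi_aa (hd : 3 ≤ d) (hM : ∀ i j : Fin d, M.M i j =
      if i = j then 1 else if j = i + ⟨1, Nat.lt_of_lt_of_le (by norm_num) hd⟩ then k i
      else if i = j + ⟨1, Nat.lt_of_lt_of_le (by norm_num) hd⟩ then k j else 0) (i : Fin d) :
    phi k M hd hM (aa k i) = phiF M (Nat.lt_of_lt_of_le (by norm_num) hd) i :=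
  PresentedGroup.toGroup.of (phi_rels k M hd hM)

lemma phi_pp (hd : 3 ≤ d) (hM : ∀ i j : Fin d, M.M i j =
      if i = j then 1 else if j = i + ⟨1, Nat.lt_of_lt_of_le (by norm_num) hd⟩ then k i
      else if i = j + ⟨1, Nat.lt_of_lt_of_le (by norm_num) hd⟩ then k j else 0) (j : ℕ) (hj : j ≤ d) :
    phi k M hd hM (pp k j) = sfun M (by omega) 0 * sfun M (by omega) j := by
  unfold pp
  rw [map_list_prod, List.map_take, List.map_ofFn]
  have h3 : (⇑(phi k M hd hM) ∘ aa k) = phiF M (by omega) := by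
    funext i
    rw [Function.comp_apply, phi_aa k M hd hM i]
  rw [h3]
  exact tele2 M (by omega) j hj

end CoxeterSide


section Back

variable {d : ℕ} (k : Fin d → ℕ) (M : CoxeterMatrix (Fin d))

/-- The hom `C2 →* W_K` sending the generator to `s_0`. -/
def f2 (hd0 : 0 < d) : Multiplicative (ZMod 2) →* M.Group :=
  homC2 (sfun M hd0 0) (by rw [pow_two]; exact sfun_sq M hd0 0)

lemma compat (hd : 3 ≤ d)
    (hM : ∀ i j : Fin d, M.M i j =
      if i = j then 1 else if j = i + ⟨1, Nat.lt_of_lt_of_le (by norm_num) hd⟩ then k i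
      else if i = j + ⟨1, Nat.lt_of_lt_of_le (by norm_num) hd⟩ then k j else 0) :
    ∀ g : Multiplicative (ZMod 2),
      (phi k M hd hM).comp ((theta k g).toMonoidHom)
        = (MulAut.conj (f2 M (by omega) g)).toMonoidHom.comp (phi k M hd hM) := by
  intro g
  rcases (show ∀ x : Multiplicative (ZMod 2), x = 1 ∨ x = Multiplicative.ofAdd 1 by decide) g
    with rfl | rfl
  · apply MonoidHom.ext
    intro x
    simp
  · have htheta : theta k (Multiplicative.ofAdd 1) = SS k := homC2_ofAdd_one _ _
    have hf2 : f2 M (by omega : 0 < d) (Multiplicative.ofAdd 1)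
        = sfun M (by omega) 0 := homC2_ofAdd_one _ _
    apply PresentedGroup.ext
    intro i
    have lhs1 : (theta k (Multiplicative.ofAdd 1)).toMonoidHom (PresentedGroup.of i : GG k)
        = sigma k (aa k i) := by rw [htheta]; rfl
    rw [MonoidHom.comp_apply, MonoidHom.comp_apply, lhs1, sigma_aa, map_mul, map_inv,
      phi_pp k M hd hM i.val (le_of_lt i.isLt), phi_pp k M hd hM (i.val + 1) i.isLt,
      MulEquiv.coe_toMonoidHom, MulAut.conj_apply, hf2,
      show (PresentedGroup.of i : GG k) = aa k i from rfl, phi_aa, phiF_eq,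
      mul_inv_rev, sfun_inv, sfun_inv]
    group

/-- The hom `G ⋊ C2 →* W_K`. -/
def PhiE (hd : 3 ≤ d)
    (hM : ∀ i j : Fin d, M.M i j =
      if i = j then 1 else if j = i + ⟨1, Nat.lt_of_lt_of_le (by norm_num) hd⟩ then k i
      else if i = j + ⟨1, Nat.lt_of_lt_of_le (by norm_num) hd⟩ then k j else 0) :
    EE k →* M.Group :=
  SemidirectProduct.lift (phi k M hd hM) (f2 M (by omega)) (compat k M hd hM)

lemma Phi_Theta (hd : 3 ≤ d)
    (hM : ∀ i j : Fin d, M.M i j =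
      if i = j then 1 else if j = i + ⟨1, Nat.lt_of_lt_of_le (by norm_num) hd⟩ then k i
      else if i = j + ⟨1, Nat.lt_of_lt_of_le (by norm_num) hd⟩ then k j else 0) (w : M.Group) :
    PhiE k M hd hM (Theta k M hd hM w) = w := by
  have hcomp : (PhiE k M hd hM).comp (Theta k M hd hM) = MonoidHom.id M.Group := by
    apply M.toCoxeterSystem.ext_simple
    intro i
    show PhiE k M hd hM (Theta k M hd hM (PresentedGroup.of i)) = PresentedGroup.of i
    rw [Theta_of]
    have hffi : (ff k i : EE k)
        = SemidirectProduct.inl ((pp k i.val)⁻¹)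
          * SemidirectProduct.inr (Multiplicative.ofAdd 1) := by
      exact SemidirectProduct.mk_eq_inl_mul_inr _ _
    rw [hffi, map_mul]
    unfold PhiE
    rw [SemidirectProduct.lift_inl, SemidirectProduct.lift_inr]
    have hf2 : f2 M (by omega : 0 < d) (Multiplicative.ofAdd 1)
        = sfun M (by omega) 0 := homC2_ofAdd_one _ _
    rw [hf2, map_inv, phi_pp k M hd hM i.val (le_of_lt i.isLt), mul_inv_rev, sfun_inv,
      sfun_inv, mul_assoc, sfun_sq, mul_one]
    rw [← simple_eq_sfun M (by omega) i]
    rfl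
  exact DFunLike.congr_fun hcomp w

end Back

end Stmt0Aux

open Stmt0Aux in
theorem stmt0 (d : ℕ) (hd : 3 ≤ d) (k : Fin d → ℕ) (hk : ∀ i, k i ≠ 1)
    (M : CoxeterMatrix (Fin d))
    (hM : ∀ i j : Fin d, M.M i j =
      if i = j then 1 else if j = i + ⟨1, by omega⟩ then k i else if i = j + ⟨1, by omega⟩ then k j else 0)
    (sgn : M.Group →* Multiplicative (ZMod 2))
    (hsgn : ∀ i : Fin d, sgn (PresentedGroup.of i) = Multiplicative.ofAdd 1) :
    Nonempty (sgn.ker ≃* PresentedGroup (altRels d k)) := by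
  classical
  set Θ := Theta k M hd hM with hTheta
  have hsgn_eq : ∀ w : M.Group, sgn w = SemidirectProduct.rightHom (Θ w) := by
    have h : sgn = SemidirectProduct.rightHom.comp Θ := by
      apply M.toCoxeterSystem.ext_simple
      intro i
      show sgn (PresentedGroup.of i)
        = SemidirectProduct.rightHom (Θ (PresentedGroup.of i))
      rw [hsgn i, hTheta, Theta_of]
      rfl
    intro w
    rw [h]
    rfl
  have hker_right : ∀ w : sgn.ker, (Θ (w : M.Group)).right = 1 := by
    intro w
    have h1 := w.2
    rw [MonoidHom.mem_ker] at h1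
    have h2 := hsgn_eq (w : M.Group)
    rw [h1] at h2
    exact h2.symm
  let ψ : sgn.ker →* GG k :=
    { toFun := fun w => (Θ (w : M.Group)).left
      map_one' := by
        show (Θ ((1 : sgn.ker) : M.Group)).left = 1
        rw [OneMemClass.coe_one, map_one]
        rfl
      map_mul' := fun w₁ w₂ => by
        show (Θ ((w₁ * w₂ : sgn.ker) : M.Group)).left = _
        rw [MulMemClass.coe_mul, map_mul, SemidirectProduct.mul_left, hker_right w₁,
          map_one, MulAut.one_apply] }
  have hker : ∀ g : GG k, phi k M hd hM g ∈ sgn.ker := by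
    have hcomp : sgn.comp (phi k M hd hM) = 1 := by
      apply PresentedGroup.ext
      intro i
      rw [MonoidHom.comp_apply, show (PresentedGroup.of i : GG k) = aa k i from rfl,
        phi_aa]
      unfold phiF
      rw [map_mul]
      rw [show (M.simple i : M.Group) = PresentedGroup.of i from rfl,
        show (M.simple (i + ⟨1, by omega⟩) : M.Group)
          = PresentedGroup.of (i + ⟨1, by omega⟩) from rfl, hsgn, hsgn]
      exact C2_sq
    intro g
    rw [MonoidHom.mem_ker]
    have := DFunLike.congr_fun hcomp g
    simpa using this
  let φ' : GG k →* sgn.ker := (phi k M hd hM).codRestrict sgn.ker hker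
  have left_inv : ∀ w : sgn.ker, φ' (ψ w) = w := by
    intro w
    apply Subtype.ext
    show phi k M hd hM ((Θ (w : M.Group)).left) = (w : M.Group)
    have hTw : Θ (w : M.Group)
        = SemidirectProduct.inl ((Θ (w : M.Group)).left) := by
      ext
      · rfl
      · rw [hker_right w]
        rfl
    have h3 := Phi_Theta k M hd hM (w : M.Group)
    rw [hTheta] at hTw ⊢
    rw [hTw] at h3
    unfold PhiE at h3
    rw [SemidirectProduct.lift_inl] at h3
    exact h3
  have right_inv : ∀ g : GG k, ψ (φ' g) = g := by
    have hcomp : ψ.comp φ' = MonoidHom.id (GG k) := by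
      apply PresentedGroup.ext
      intro i
      show (Θ (phi k M hd hM (aa k i))).left = PresentedGroup.of i
      rw [phi_aa]
      unfold phiF
      rw [map_mul]
      rw [show (M.simple i : M.Group) = PresentedGroup.of i from rfl,
        show (M.simple (i + ⟨1, by omega⟩) : M.Group)
          = PresentedGroup.of (i + ⟨1, by omega⟩) from rfl]
      rw [hTheta, Theta_of, Theta_of,
        ff_mul k i _ (le_of_lt (i + (⟨1, by omega⟩ : Fin d)).isLt)]
      have hv : ((i + (⟨1, by omega⟩ : Fin d)) : Fin d).val = (i.val + 1) % d := by
        simp [Fin.add_def]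
      rw [SemidirectProduct.left_inl, hv, key]
      rfl
    intro g
    exact DFunLike.congr_fun hcomp g
  exact ⟨{ toFun := ψ
           invFun := φ'
           left_inv := left_inv
           right_inv := right_inv
           map_mul' := ψ.map_mul }⟩
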